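/- Let (M,d) be a finite metric space with N+1 points, {x,y} a pair of distinct points of M, and (b_n) ∈ B(M). If p ∈ [π_{(b_n)}]_{x,y}, then Σ_{n=1}^N |b*_n(δ_x − δ_y)| ‖b_n‖ ≤ E_p( d_T(x,y) ). -/

import Mathlib

open Finset

noncomputable section
open scoped Classical

namespace TCS

/-- The indicator function of a point. -/
def indic {V : Type*} [DecidableEq V] (x : V) : V → ℝ := fun z => if z = x then 1 else 0

/-- The molecule `δ_x - δ_y`. -/
def mol {V : Type*} [DecidableEq V] (x y : V) : V → ℝ := fun z => indic x z - indic y z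

/-- `d` is a metric on `V`. -/
def IsMetric {V : Type*} (d : V → V → ℝ) : Prop :=
  (∀ x y, d x y = d y x) ∧ (∀ x y, d x y = 0 ↔ x = y) ∧ ∀ x y z, d x z ≤ d x y + d y z

/-- The transportation cost norm of `μ` (an element of the free space over `(V, d)`,
i.e. a function with total sum zero), defined by duality with `Lip_0`. -/
def tcNorm {V : Type*} [Fintype V] (d : V → V → ℝ) (x0 : V) (μ : V → ℝ) : ℝ :=
  sSup {c : ℝ | ∃ f : V → ℝ, f x0 = 0 ∧ (∀ x y, |f x - f y| ≤ d x y) ∧ c = ∑ x, μ x * f x}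

/-- `(b, bstar)` is a basis of the free space over `Fin (N+1)` (with basepoint `0`),
indexed by `n ≠ 0`, together with its coordinate functionals. -/
def IsFreeBasis (N : ℕ) (b : Fin (N+1) → Fin (N+1) → ℝ)
    (bstar : Fin (N+1) → (Fin (N+1) → ℝ) → ℝ) : Prop :=
  (∀ n : Fin (N+1), n ≠ 0 → ∑ x, b n x = 0) ∧
  (∀ μ : Fin (N+1) → ℝ, (∑ x, μ x = 0) → ∀ z,
      μ z = ∑ n ∈ univ.filter (· ≠ (0 : Fin (N+1))), bstar n μ * b n z) ∧
  (∀ n m : Fin (N+1), n ≠ 0 → m ≠ 0 → bstar n (b m) = if n = m then 1 else 0) ∧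
  (∀ n (c : ℝ) (μ ν : Fin (N+1) → ℝ), bstar n (c • μ + ν) = c * bstar n μ + bstar n ν)

/-- Every canonical projection of the (ordered) basis `(b, bstar)` is a stochastic
retraction. -/
def IsStochProj (N : ℕ) (b : Fin (N+1) → Fin (N+1) → ℝ)
    (bstar : Fin (N+1) → (Fin (N+1) → ℝ) → ℝ) : Prop :=
  ∀ n : Fin (N+1),
    ∃ S : Finset (Fin (N+1)), (0 : Fin (N+1)) ∈ S ∧
      ∃ R : Fin (N+1) → Fin (N+1) → ℝ,
        (∀ x, (∀ z, 0 ≤ R x z) ∧ (∀ z, z ∉ S → R x z = 0) ∧ ∑ z, R x z = 1) ∧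
        (∀ x ∈ S, R x = indic x) ∧
        (∀ μ : Fin (N+1) → ℝ, (∑ x, μ x = 0) → ∀ z,
          (∑ i ∈ univ.filter (fun i => i ≠ (0 : Fin (N+1)) ∧ i ≤ n), bstar i μ * b i z)
            = ∑ x, μ x * R x z)

/-- The `ℓ₁`-distortion of the basis `(b, bstar)`. -/
def d1Basis {N : ℕ} (d : Fin (N+1) → Fin (N+1) → ℝ) (b : Fin (N+1) → Fin (N+1) → ℝ)
    (bstar : Fin (N+1) → (Fin (N+1) → ℝ) → ℝ) : ℝ :=
  sSup {c : ℝ | ∃ μ : Fin (N+1) → ℝ, (∑ x, μ x = 0) ∧ tcNorm d 0 μ = 1 ∧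
    c = ∑ n ∈ univ.filter (· ≠ (0 : Fin (N+1))), |bstar n μ| * tcNorm d 0 (b n)}

/-- The `ℓ₁ᴺ`-distortion of the metric space `(Fin (N+1), d)`. -/
def d1Space {N : ℕ} (d : Fin (N+1) → Fin (N+1) → ℝ) : ℝ :=
  sInf {c : ℝ | ∃ b bstar, IsFreeBasis N b bstar ∧ c = d1Basis d b bstar}

/-- The stochastic `ℓ₁ᴺ`-distortion of the metric space `(Fin (N+1), d)`. -/
def sd1Space {N : ℕ} (d : Fin (N+1) → Fin (N+1) → ℝ) : ℝ :=
  sInf {c : ℝ | ∃ b bstar, IsFreeBasis N b bstar ∧ IsStochProj N b bstar ∧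
      c = d1Basis d b bstar}

/-- The data `(λ_{n,i})` of a normalised stochastic basis. -/
def LamData (N : ℕ) (lam : Fin (N+1) → Fin (N+1) → ℝ) : Prop :=
  (∀ n i, 0 ≤ lam n i ∧ lam n i ≤ 1) ∧
  (∀ n i : Fin (N+1), ¬ i < n → lam n i = 0) ∧
  (∀ n : Fin (N+1), n ≠ 0 → ∑ i, lam n i = 1)

/-- The normalised stochastic basis with data `F`, `(λ_{n,i})`:
`b n = δ_{F n} - ∑_{i<n} λ_{n,i} δ_{F i}`. -/
def normBasisF {N : ℕ} (F : Equiv.Perm (Fin (N+1))) (lam : Fin (N+1) → Fin (N+1) → ℝ)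
    (n : Fin (N+1)) : Fin (N+1) → ℝ :=
  fun z => indic (F n) z - ∑ i, lam n i * indic (F i) z

/-- The normalised stochastic basis after identifying `M` with `{0, …, N}` via `F`. -/
def normBasis {N : ℕ} (lam : Fin (N+1) → Fin (N+1) → ℝ) : Fin (N+1) → Fin (N+1) → ℝ :=
  normBasisF (Equiv.refl _) lam

/-- `bstar` is the family of coordinate functionals of the normalised
stochastic basis with data `F`, `(λ_{n,i})`. -/
def IsCoordF {N : ℕ} (F : Equiv.Perm (Fin (N+1))) (lam : Fin (N+1) → Fin (N+1) → ℝ)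
    (bstar : Fin (N+1) → (Fin (N+1) → ℝ) → ℝ) : Prop :=
  ∀ μ : Fin (N+1) → ℝ, (∑ x, μ x = 0) → ∀ z,
    μ z = ∑ n ∈ univ.filter (· ≠ (0 : Fin (N+1))), bstar n μ * normBasisF F lam n z

/-- The auxiliary function `α(μ)` defined by downwards recursion:
`α(μ)(n) = μ n + ∑_{m > n} α(μ)(m) λ_{m,n}`. -/
def alpha {N : ℕ} (lam : Fin (N+1) → Fin (N+1) → ℝ) (μ : Fin (N+1) → ℝ)
    (n : Fin (N+1)) : ℝ :=
  μ n + ∑ m ∈ (Finset.univ.filter (fun m : Fin (N+1) => n < m)).attach,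
      alpha lam μ m.1 * lam m.1 n
termination_by (N + 1) - n.val
decreasing_by
  have hm := m.2
  simp only [Finset.mem_filter, Finset.mem_univ, true_and] at hm
  have h1 : n.val < m.1.val := hm
  have h2 := m.1.isLt
  omega

/-- Trees on `{0,…,N}` compatible with the order: given by a parent map with
`par n < n` for `n ≠ 0`. -/
def Tr (N : ℕ) : Type :=
  {par : Fin (N+1) → Fin (N+1) // par 0 = 0 ∧ ∀ n, n ≠ 0 → par n < n}

instance (N : ℕ) : Finite (Tr N) :=
  inferInstanceAs (Finite {par : Fin (N+1) → Fin (N+1) // par 0 = 0 ∧ ∀ n, n ≠ 0 → par n < n})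

noncomputable instance (N : ℕ) : Fintype (Tr N) := Fintype.ofFinite _

/-- `a` lies on the tree path from `x` to the root `0`. -/
def Anc {N : ℕ} (T : Tr N) (x a : Fin (N+1)) : Prop :=
  Relation.ReflTransGen (fun u v => v = T.1 u ∧ u ≠ 0) x a

/-- The meeting point `m_T(x,y)`: the minimal vertex of the tree path `[x,y]_T`,
equivalently the nearest common ancestor. -/
noncomputable def meet {N : ℕ} (T : Tr N) (x y : Fin (N+1)) : Fin (N+1) :=
  ((Finset.univ.filter (fun a => Anc T x a ∧ Anc T y a)).max).unbotD 0

/-- `p` is a probability distribution on `Tr N`. -/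
def IsProb {N : ℕ} (p : Tr N → ℝ) : Prop := (∀ T, 0 ≤ p T) ∧ ∑ T, p T = 1

/-- Probability of an event. -/
def probOf {N : ℕ} (p : Tr N → ℝ) (P : Tr N → Prop) : ℝ :=
  ∑ T ∈ Finset.univ.filter P, p T

/-- Expectation. -/
def expval {N : ℕ} (p : Tr N → ℝ) (f : Tr N → ℝ) : ℝ := ∑ T, p T * f T

/-- The geodesic distance `d_T(x,y)` of the weighted tree `T` (edge `{n, par n}`
carrying weight `d n (par n)`). -/
noncomputable def treeDist {N : ℕ} (d : Fin (N+1) → Fin (N+1) → ℝ) (T : Tr N)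
    (x y : Fin (N+1)) : ℝ :=
  ∑ s ∈ Finset.univ.filter (fun s =>
      (Anc T x s ∨ Anc T y s) ∧ Anc T s (meet T x y) ∧ s ≠ meet T x y),
    d s (T.1 s)

/-- `s` lies on the half-open segment `[z, m)_T`. -/
def onHalfSeg {N : ℕ} (T : Tr N) (z m s : Fin (N+1)) : Prop :=
  Anc T z s ∧ Anc T s m ∧ s ≠ m

/-- `p` is `(x,y)`-independent. -/
def XYIndep {N : ℕ} (p : Tr N → ℝ) (x y : Fin (N+1)) : Prop :=
  ∀ z : Fin (N+1), (z = x ∨ z = y) → ∀ s t : Fin (N+1), t < s →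
    probOf p (fun T => T.1 s = t ∧ onHalfSeg T z (meet T x y) s)
      = probOf p (fun T => T.1 s = t) * probOf p (fun T => onHalfSeg T z (meet T x y) s)

/-- `p0` and `p` are compatible: every vertex pair has the same probability of
being an edge of the random tree. -/
def Compat {N : ℕ} (p0 p : Tr N → ℝ) : Prop :=
  ∀ s t : Fin (N+1), t < s →
    probOf p0 (fun T => T.1 s = t) = probOf p (fun T => T.1 s = t)

/-- The product probability `π_{(b_n)}` determined by the data `(λ_{n,i})`. -/
def prodProb {N : ℕ} (lam : Fin (N+1) → Fin (N+1) → ℝ) (T : Tr N) : ℝ :=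
  ∏ n ∈ Finset.univ.filter (fun n : Fin (N+1) => n ≠ 0), lam n (T.1 n)

/-- The (strictly decreasing) chain with vertex set `S` is a subgraph of `T`:
consecutive elements of `S` are linked by the parent map. -/
def chainInTree {N : ℕ} (S : Finset (Fin (N+1))) (T : Tr N) : Prop :=
  ∀ a ∈ S, (∃ c ∈ S, c < a) → T.1 a ∈ S ∧ ∀ c ∈ S, c < a → c ≤ T.1 a

end TCS


namespace TCS

variable {N : ℕ} {p : Tr N → ℝ}

lemma anc_le {T : Tr N} {a b : Fin (N+1)} (h : Anc T a b) : b ≤ a := by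
  induction h with
  | refl => exact le_refl _
  | tail h1 h2 ih =>
    obtain ⟨rfl, hu⟩ := h2
    exact le_trans (T.2.2 _ hu).le ih

lemma anc_zero_aux (T : Tr N) : ∀ (k : ℕ) (a : Fin (N+1)), a.val ≤ k → Anc T a 0
  | 0, a, ha => by
      have : a = 0 := Fin.ext (by simpa using ha)
      rw [this]; exact Relation.ReflTransGen.refl
  | (k+1), a, ha => by
      by_cases h : a = 0
      · rw [h]; exact Relation.ReflTransGen.refl
      · have hlt := T.2.2 a h
        exact Relation.ReflTransGen.head ⟨rfl, h⟩
          (anc_zero_aux T k (T.1 a) (by omega))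

lemma anc_zero (T : Tr N) (a : Fin (N+1)) : Anc T a 0 := anc_zero_aux T a.val a le_rfl

lemma anc_of_zero {T : Tr N} {a : Fin (N+1)} (h : Anc T 0 a) : a = 0 := by
  rcases h.cases_head with h | ⟨c, hc, -⟩
  · exact h.symm
  · exact absurd hc.2 (by simp)

lemma anc_total {T : Tr N} {z a b : Fin (N+1)} (ha : Anc T z a) (hb : Anc T z b) :
    Anc T a b ∨ Anc T b a := by
  induction ha with
  | refl => exact Or.inl hb
  | tail h1 h2 ih =>
    rcases ih with h | h
    · rcases h.cases_head with h' | ⟨c, hc1, hc2⟩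
      · exact Or.inr (h' ▸ Relation.ReflTransGen.single h2)
      · obtain ⟨rfl, -⟩ := hc1
        obtain ⟨rfl, -⟩ := h2
        exact Or.inl hc2
    · exact Or.inr (h.tail h2)

lemma anc_meet (T : Tr N) (x y : Fin (N+1)) :
    Anc T x (meet T x y) ∧ Anc T y (meet T x y) := by
  have h0 : (0 : Fin (N+1)) ∈ univ.filter (fun a => Anc T x a ∧ Anc T y a) := by
    simp [anc_zero]
  obtain ⟨b, hb⟩ := Finset.max_of_mem h0
  have hmem := Finset.mem_of_max hb
  simp only [mem_filter, mem_univ, true_and] at hmem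
  unfold meet
  rw [hb, WithBot.unbotD_coe]
  exact hmem

lemma probOf_nonneg (hp : ∀ T, 0 ≤ p T) (P : Tr N → Prop) : 0 ≤ probOf p P :=
  Finset.sum_nonneg fun T _ => hp T

lemma probOf_mono (hp : ∀ T, 0 ≤ p T) {P Q : Tr N → Prop} (h : ∀ T, P T → Q T) :
    probOf p P ≤ probOf p Q := by
  apply Finset.sum_le_sum_of_subset_of_nonneg
  · exact Finset.monotone_filter_right _ (fun T _ hT => h T hT)
  · intro T _ _; exact hp T

lemma probOf_congr {P Q : Tr N → Prop} (h : ∀ T, P T ↔ Q T) :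
    probOf p P = probOf p Q := by
  unfold probOf
  congr 1
  apply Finset.filter_congr
  intro T _; simp [h T]

lemma probOf_compl (hp : IsProb p) (P : Tr N → Prop) :
    probOf p P + probOf p (fun T => ¬ P T) = 1 := by
  unfold probOf
  rw [Finset.sum_filter_add_sum_filter_not]
  exact hp.2

lemma probOf_of_false {P : Tr N → Prop} (h : ∀ T, ¬ P T) : probOf p P = 0 := by
  unfold probOf
  rw [Finset.filter_false_of_mem (fun T _ => h T), Finset.sum_empty]

lemma marginal {lam : Fin (N+1) → Fin (N+1) → ℝ} (hlam : LamData N lam)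
    {n t : Fin (N+1)} (hn : n ≠ 0) (ht : t < n) :
    probOf (prodProb lam) (fun T => T.1 n = t) = lam n t := by
  classical
  set tt : Fin (N+1) → Finset (Fin (N+1)) :=
    fun m => if m = 0 then {0} else if m = n then {t} else univ.filter (· < m) with htt
  set f : Fin (N+1) → Fin (N+1) → ℝ := fun m j => if m = 0 then 1 else lam m j with hf
  have hmem : ∀ g ∈ Fintype.piFinset tt, g 0 = 0 ∧ (∀ m, m ≠ 0 → g m < m) ∧ g n = t := by
    intro g hg
    rw [Fintype.mem_piFinset] at hg
    refine ⟨?_, ?_, ?_⟩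
    · have := hg 0; simp only [tt, if_pos rfl, Finset.mem_singleton] at this; exact this
    · intro m hm
      have := hg m
      by_cases hmn : m = n
      · subst hmn
        simp [tt, hm] at this
        rw [this]; exact ht
      · simp only [tt, if_neg hm, if_neg hmn, Finset.mem_filter, Finset.mem_univ,
          true_and] at this
        exact this
    · have := hg n; simp [tt, hn] at this
      exact this
  have key : probOf (prodProb lam) (fun T => T.1 n = t)
      = ∑ g ∈ Fintype.piFinset tt, ∏ m, f m (g m) := by
    unfold probOf
    refine Finset.sum_bij' (fun (T : Tr N) (_ : T ∈ _) => T.1)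
      (fun g hg => (⟨g, (hmem g hg).1, fun m hm => (hmem g hg).2.1 m hm⟩ : Tr N))
      ?_ ?_ ?_ ?_ ?_
    · intro T hT
      simp only [Finset.mem_filter, Finset.mem_univ, true_and] at hT
      rw [Fintype.mem_piFinset]
      intro m
      by_cases hm0 : m = 0
      · subst hm0; simp only [tt, if_pos rfl, Finset.mem_singleton]; exact T.2.1
      by_cases hmn : m = n
      · subst hmn; simp [tt, hm0]; exact hT
      · simp only [tt, if_neg hm0, if_neg hmn, Finset.mem_filter, Finset.mem_univ, true_and]
        exact T.2.2 m hm0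
    · intro g hg
      exact (@Finset.mem_filter _ (fun T : Tr N => T.1 n = t) (fun _ => Classical.propDecidable _) univ _).mpr ⟨Finset.mem_univ _, (hmem g hg).2.2⟩
    · intro T hT; rfl
    · intro g hg; rfl
    · intro T hT
      unfold prodProb
      rw [Finset.prod_filter]
      apply Finset.prod_congr rfl
      intro m _
      by_cases hm : m = 0
      · simp [f, hm]
      · simp [f, hm]
  rw [key, ← Finset.prod_univ_sum]
  have : ∀ m : Fin (N+1), (∑ j ∈ tt m, f m j) = if m = n then lam n t else 1 := by
    intro m
    by_cases hm0 : m = 0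
    · subst hm0
      simp only [tt, f, if_pos rfl, Finset.sum_singleton, if_neg (Ne.symm hn)]
    by_cases hmn : m = n
    · subst hmn
      simp [tt, f, hm0]
    · simp only [tt, f, if_neg hm0, if_neg hmn]
      have : ∑ j ∈ univ.filter (· < m), lam m j = ∑ j, lam m j := by
        apply Finset.sum_filter_of_ne
        intro j _ hj
        by_contra hc
        exact hj (hlam.2.1 m j hc)
      rw [this, hlam.2.2 m hm0]
  rw [Finset.prod_congr rfl (fun m _ => this m), Finset.prod_ite_eq' univ n
    (fun _ => lam n t)]
  simp

lemma probOf_eq_sum (p : Tr N → ℝ) (P : Tr N → Prop) :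
    probOf p P = ∑ T, if P T then p T else 0 := by
  unfold probOf; exact Finset.sum_filter _ _

lemma seg_sum (p : Tr N → ℝ) (x y z v : Fin (N+1)) :
    ∑ m ∈ univ.filter (fun m => v < m),
        probOf p (fun T => T.1 m = v ∧ onHalfSeg T z (meet T x y) m)
      = probOf p (fun T => Anc T z v ∧ Anc T v (meet T x y) ∧ v ≠ z) := by
  refine (Finset.sum_congr rfl (fun m _ => probOf_eq_sum p _)).trans ?_
  rw [Finset.sum_comm, probOf_eq_sum p]
  apply Finset.sum_congr rfl
  intro T _
  by_cases hseg : Anc T z v ∧ Anc T v (meet T x y) ∧ v ≠ z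
  · rw [if_pos hseg]
    obtain ⟨hzv, hvc, hvz⟩ := hseg
    rcases hzv.cases_tail with h | ⟨m₀, hm1, hm2⟩
    · exact absurd h hvz
    have hpar : T.1 m₀ = v := hm2.1.symm
    have hm0ne : m₀ ≠ 0 := hm2.2
    have hvlt : v < m₀ := hpar ▸ T.2.2 m₀ hm0ne
    have hE : T.1 m₀ = v ∧ onHalfSeg T z (meet T x y) m₀ := by
      refine ⟨hpar, hm1, Relation.ReflTransGen.head hm2 hvc, ?_⟩
      intro hcontra
      have := anc_le hvc
      rw [← hcontra] at this
      exact absurd hvlt (not_lt.mpr this)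
    refine (Finset.sum_eq_single_of_mem m₀ (by simpa using hvlt) ?_).trans ?_
    · intro m hm hne
      simp only [Finset.mem_filter, Finset.mem_univ, true_and] at hm
      rw [if_neg]
      rintro ⟨hpar', hzm, hmc, hmne⟩
      have hmne0 : m ≠ 0 := by
        intro h0; rw [h0] at hm; exact absurd hm (by simp [Fin.lt_def])
      apply hne
      rcases anc_total hzm hm1 with h | h
      · rcases h.cases_head with h' | ⟨w, hw1, hw2⟩
        · exact h'
        · rw [hw1.1, hpar'] at hw2
          exact absurd (anc_le hw2) (not_le.mpr hvlt)
      · rcases h.cases_head with h' | ⟨w, hw1, hw2⟩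
        · exact h'.symm
        · rw [hw1.1, hpar] at hw2
          exact absurd (anc_le hw2) (not_le.mpr hm)
    · rw [if_pos hE]
  · rw [if_neg hseg]
    apply Finset.sum_eq_zero
    intro m hm
    simp only [Finset.mem_filter, Finset.mem_univ, true_and] at hm
    rw [if_neg]
    rintro ⟨hpar, hzm, hmc, hmne⟩
    have hmne0 : m ≠ 0 := by
      intro h0; rw [h0] at hm; exact absurd hm (by simp [Fin.lt_def])
    apply hseg
    refine ⟨hzm.tail ⟨hpar.symm, hmne0⟩, ?_, ?_⟩
    · rcases hmc.cases_head with h' | ⟨w, hw1, hw2⟩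
      · exact absurd h' hmne
      · rw [hw1.1, hpar] at hw2; exact hw2
    · intro hvz
      rw [hvz] at hm
      exact absurd (anc_le hzm) (not_le.mpr hm)

lemma seg_diff (x y z v : Fin (N+1)) (hz : z = x ∨ z = y) :
    probOf p (fun T => onHalfSeg T z (meet T x y) v)
      - probOf p (fun T => Anc T z v ∧ Anc T v (meet T x y) ∧ v ≠ z)
    = probOf p (fun T => v = z ∧ z ≠ meet T x y)
      - probOf p (fun T => v = meet T x y ∧ v ≠ z) := by
  unfold probOf
  rw [Finset.sum_filter, Finset.sum_filter, Finset.sum_filter, Finset.sum_filter,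
    ← Finset.sum_sub_distrib, ← Finset.sum_sub_distrib]
  apply Finset.sum_congr rfl
  intro T _
  have hzc : Anc T z (meet T x y) := by
    rcases hz with h | h
    · rw [h]; exact (anc_meet T x y).1
    · rw [h]; exact (anc_meet T x y).2
  unfold onHalfSeg
  by_cases h1 : v = z
  · subst h1
    by_cases h2 : v = meet T x y
    · rw [if_neg (by tauto), if_neg (by tauto), if_neg (by tauto), if_neg (by tauto)]
    · rw [if_pos ⟨Relation.ReflTransGen.refl, hzc, h2⟩, if_neg (by tauto),
        if_pos ⟨rfl, h2⟩, if_neg (by tauto)]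
  · by_cases h2 : v = meet T x y
    · subst h2
      rw [if_neg (by tauto), if_pos ⟨hzc, Relation.ReflTransGen.refl, h1⟩,
        if_neg (by tauto), if_pos ⟨rfl, h1⟩]
    · by_cases h3 : Anc T z v ∧ Anc T v (meet T x y)
      · rw [if_pos ⟨h3.1, h3.2, h2⟩, if_pos ⟨h3.1, h3.2, h1⟩,
          if_neg (by tauto), if_neg (by tauto)]
        ring
      · rw [if_neg (by tauto), if_neg (by tauto), if_neg (by tauto), if_neg (by tauto)]

lemma metric_nonneg {d : Fin (N+1) → Fin (N+1) → ℝ} (hd : IsMetric d)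
    (a b : Fin (N+1)) : 0 ≤ d a b := by
  have h1 := hd.2.2 a b a
  have h2 : d a a = 0 := (hd.2.1 a a).mpr rfl
  have h3 : d b a = d a b := hd.1 b a
  linarith

lemma normBasis_apply (lam : Fin (N+1) → Fin (N+1) → ℝ) (n v : Fin (N+1)) :
    normBasis lam n v = (if v = n then 1 else 0) - lam n v := by
  unfold normBasis normBasisF indic
  show (if v = n then (1:ℝ) else 0) - ∑ i, lam n i * (if v = i then 1 else 0) = _
  simp

lemma sum_indic (x : Fin (N+1)) : ∑ v, indic x v = 1 := by
  unfold indic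
  rw [Finset.sum_ite_eq' univ x (fun _ => (1:ℝ))]
  simp

lemma mol_sum (x y : Fin (N+1)) : ∑ v, mol x y v = 0 := by
  unfold mol
  rw [Finset.sum_sub_distrib, sum_indic, sum_indic, sub_self]

lemma tcNorm_bound {d : Fin (N+1) → Fin (N+1) → ℝ} (hd : IsMetric d)
    {lam : Fin (N+1) → Fin (N+1) → ℝ} (hlam : LamData N lam)
    {n : Fin (N+1)} (hn : n ≠ 0) :
    tcNorm d 0 (normBasis lam n) ≤ ∑ t, lam n t * d n t := by
  have hB : 0 ≤ ∑ t, lam n t * d n t :=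
    Finset.sum_nonneg fun t _ => mul_nonneg (hlam.1 n t).1 (metric_nonneg hd n t)
  apply Real.sSup_le _ hB
  rintro c ⟨f, hf0, hlip, rfl⟩
  have e1 : ∑ v, normBasis lam n v * f v = ∑ v, lam n v * (f n - f v) := by
    have l1 : ∑ v, normBasis lam n v * f v = f n - ∑ v, lam n v * f v := by
      rw [Finset.sum_congr rfl (fun v _ => by
        rw [normBasis_apply, sub_mul, ite_mul, one_mul, zero_mul])]
      rw [Finset.sum_sub_distrib, Finset.sum_ite_eq' univ n f]
      simp
    have l2 : ∑ v, lam n v * (f n - f v) = f n - ∑ v, lam n v * f v := by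
      rw [Finset.sum_congr rfl (fun v _ => mul_sub (lam n v) (f n) (f v)),
        Finset.sum_sub_distrib, ← Finset.sum_mul, hlam.2.2 n hn, one_mul]
    rw [l1, l2]
  rw [e1]
  apply Finset.sum_le_sum
  intro t _
  exact mul_le_mul_of_nonneg_left (le_trans (le_abs_self _) (hlip n t)) (hlam.1 n t).1

lemma expand_basis (lam : Fin (N+1) → Fin (N+1) → ℝ) (c : Fin (N+1) → ℝ)
    (v : Fin (N+1)) :
    ∑ n ∈ univ.filter (· ≠ (0 : Fin (N+1))), c n * normBasisF (Equiv.refl _) lam n v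
      = (if v = 0 then 0 else c v)
        - ∑ n ∈ univ.filter (· ≠ (0 : Fin (N+1))), c n * lam n v := by
  have h1 : ∀ n, c n * normBasisF (Equiv.refl _) lam n v
      = (if v = n then c n else 0) - c n * lam n v := by
    intro n
    have : normBasisF (Equiv.refl _) lam n v = (if v = n then 1 else 0) - lam n v :=
      normBasis_apply lam n v
    rw [this, mul_sub, mul_ite, mul_one, mul_zero]
  rw [Finset.sum_congr rfl (fun n _ => h1 n), Finset.sum_sub_distrib,
    Finset.sum_ite_eq (univ.filter (· ≠ (0 : Fin (N+1)))) v c]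
  congr 1
  by_cases hv : v = 0
  · simp [hv]
  · simp [hv]

lemma system {lam : Fin (N+1) → Fin (N+1) → ℝ} (hlam : LamData N lam)
    {x y : Fin (N+1)} (hxy : x ≠ y)
    (hp : IsProb p) (hcomp : Compat (prodProb lam) p) (hind : XYIndep p x y)
    (v : Fin (N+1)) :
    mol x y v
      = (probOf p (fun T => onHalfSeg T x (meet T x y) v)
          - probOf p (fun T => onHalfSeg T y (meet T x y) v))
        - ∑ m ∈ univ.filter (· ≠ (0 : Fin (N+1))),
            (probOf p (fun T => onHalfSeg T x (meet T x y) m)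
              - probOf p (fun T => onHalfSeg T y (meet T x y) m)) * lam m v := by
  have hA1 : ∑ m ∈ univ.filter (· ≠ (0 : Fin (N+1))),
        (probOf p (fun T => onHalfSeg T x (meet T x y) m)
          - probOf p (fun T => onHalfSeg T y (meet T x y) m)) * lam m v
      = ∑ m, (probOf p (fun T => onHalfSeg T x (meet T x y) m)
          - probOf p (fun T => onHalfSeg T y (meet T x y) m)) * lam m v := by
    apply Finset.sum_filter_of_ne
    intro m _ h
    have hl : lam m v ≠ 0 := fun h0 => h (by rw [h0, mul_zero])
    have hvm : v < m := by
      by_contra hc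
      exact hl (hlam.2.1 m v hc)
    intro h0
    rw [h0] at hvm
    exact absurd hvm (by simp [Fin.lt_def])
  have hA2 : ∑ m ∈ univ.filter (fun m => v < m),
        (probOf p (fun T => onHalfSeg T x (meet T x y) m)
          - probOf p (fun T => onHalfSeg T y (meet T x y) m)) * lam m v
      = ∑ m, (probOf p (fun T => onHalfSeg T x (meet T x y) m)
          - probOf p (fun T => onHalfSeg T y (meet T x y) m)) * lam m v := by
    apply Finset.sum_filter_of_ne
    intro m _ h
    have hl : lam m v ≠ 0 := fun h0 => h (by rw [h0, mul_zero])
    by_contra hc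
    exact hl (hlam.2.1 m v hc)
  rw [hA1, ← hA2]
  have hB : ∀ m ∈ univ.filter (fun m => v < m),
      (probOf p (fun T => onHalfSeg T x (meet T x y) m)
          - probOf p (fun T => onHalfSeg T y (meet T x y) m)) * lam m v
        = probOf p (fun T => T.1 m = v ∧ onHalfSeg T x (meet T x y) m)
          - probOf p (fun T => T.1 m = v ∧ onHalfSeg T y (meet T x y) m) := by
    intro m hm
    simp only [Finset.mem_filter, Finset.mem_univ, true_and] at hm
    have hm0 : m ≠ 0 := by
      intro h0; rw [h0] at hm; exact absurd hm (by simp [Fin.lt_def])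
    have hlamv : lam m v = probOf p (fun T => T.1 m = v) := by
      rw [← hcomp m v hm, marginal hlam hm0 hm]
    have e1 := hind x (Or.inl rfl) m v hm
    have e2 := hind y (Or.inr rfl) m v hm
    rw [sub_mul, hlamv, e1, e2]
    ring
  rw [Finset.sum_congr rfl hB, Finset.sum_sub_distrib, seg_sum p x y x v,
    seg_sum p x y y v]
  have dx := seg_diff (p := p) x y x v (Or.inl rfl)
  have dy := seg_diff (p := p) x y y v (Or.inr rfl)
  by_cases hvx : v = x
  · have e1 : probOf p (fun T => v = x ∧ x ≠ meet T x y)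
        = probOf p (fun T => ¬ (x = meet T x y)) :=
      probOf_congr (fun T => by simp [hvx])
    have e2 : probOf p (fun T => v = meet T x y ∧ v ≠ x) = 0 :=
      probOf_of_false (fun T h => h.2 hvx)
    have e3 : probOf p (fun T => v = y ∧ y ≠ meet T x y) = 0 :=
      probOf_of_false (fun T h => hxy (hvx ▸ h.1))
    have e4 : probOf p (fun T => v = meet T x y ∧ v ≠ y)
        = probOf p (fun T => x = meet T x y) :=
      probOf_congr (fun T => by simp [hvx, hxy])
    have compl := probOf_compl hp (fun T => x = meet T x y)
    have hmol : mol x y v = 1 := by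
      unfold mol indic; rw [if_pos hvx, if_neg (hvx ▸ hxy)]; ring
    linarith [dx, dy, e1, e2, e3, e4, compl, hmol]
  by_cases hvy : v = y
  · have e1 : probOf p (fun T => v = x ∧ x ≠ meet T x y) = 0 :=
      probOf_of_false (fun T h => hxy (by rw [← h.1, hvy]))
    have e2 : probOf p (fun T => v = meet T x y ∧ v ≠ x)
        = probOf p (fun T => y = meet T x y) :=
      probOf_congr (fun T => by simp [hvy, hxy.symm])
    have e3 : probOf p (fun T => v = y ∧ y ≠ meet T x y)
        = probOf p (fun T => ¬ (y = meet T x y)) :=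
      probOf_congr (fun T => by simp [hvy])
    have e4 : probOf p (fun T => v = meet T x y ∧ v ≠ y) = 0 :=
      probOf_of_false (fun T h => h.2 hvy)
    have compl := probOf_compl hp (fun T => y = meet T x y)
    have hmol : mol x y v = -1 := by
      unfold mol indic
      rw [if_neg (fun h : v = x => hxy (by rw [← h, hvy])), if_pos hvy]
      ring
    linarith [dx, dy, e1, e2, e3, e4, compl, hmol]
  · have e1 : probOf p (fun T => v = x ∧ x ≠ meet T x y) = 0 :=
      probOf_of_false (fun T h => hvx h.1)
    have e2 : probOf p (fun T => v = meet T x y ∧ v ≠ x)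
        = probOf p (fun T => v = meet T x y) :=
      probOf_congr (fun T => by simp [hvx])
    have e3 : probOf p (fun T => v = y ∧ y ≠ meet T x y) = 0 :=
      probOf_of_false (fun T h => hvy h.1)
    have e4 : probOf p (fun T => v = meet T x y ∧ v ≠ y)
        = probOf p (fun T => v = meet T x y) :=
      probOf_congr (fun T => by simp [hvy])
    have hmol : mol x y v = 0 := by
      unfold mol indic; rw [if_neg hvx, if_neg hvy]; ring
    linarith [dx, dy, e1, e2, e3, e4, hmol]

lemma coeff_eq {lam : Fin (N+1) → Fin (N+1) → ℝ} (hlam : LamData N lam)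
    {bstar : Fin (N+1) → (Fin (N+1) → ℝ) → ℝ}
    (hco : IsCoordF (Equiv.refl _) lam bstar)
    {x y : Fin (N+1)} (hxy : x ≠ y)
    (hp : IsProb p) (hcomp : Compat (prodProb lam) p) (hind : XYIndep p x y) :
    ∀ n : Fin (N+1), n ≠ 0 →
      bstar n (mol x y)
        = probOf p (fun T => onHalfSeg T x (meet T x y) n)
          - probOf p (fun T => onHalfSeg T y (meet T x y) n) := by
  set D : Fin (N+1) → ℝ := fun n => bstar n (mol x y)
    - (probOf p (fun T => onHalfSeg T x (meet T x y) n)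
        - probOf p (fun T => onHalfSeg T y (meet T x y) n)) with hD
  have hrec : ∀ v : Fin (N+1), v ≠ 0 →
      D v = ∑ n ∈ univ.filter (· ≠ (0 : Fin (N+1))), D n * lam n v := by
    intro v hv
    have h1 := hco (mol x y) (mol_sum x y) v
    rw [expand_basis lam (fun n => bstar n (mol x y)) v, if_neg hv] at h1
    have h2 := system hlam hxy hp hcomp hind v
    have h3 : ∑ n ∈ univ.filter (· ≠ (0 : Fin (N+1))), D n * lam n v
        = ∑ n ∈ univ.filter (· ≠ (0 : Fin (N+1))), bstar n (mol x y) * lam n v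
          - ∑ n ∈ univ.filter (· ≠ (0 : Fin (N+1))),
              (probOf p (fun T => onHalfSeg T x (meet T x y) n)
                - probOf p (fun T => onHalfSeg T y (meet T x y) n)) * lam n v := by
      rw [← Finset.sum_sub_distrib]
      apply Finset.sum_congr rfl
      intro n _
      rw [hD]
      ring
    rw [hD, h3]
    beta_reduce
    linarith [h1, h2]
  have main : ∀ k : ℕ, ∀ v : Fin (N+1), N - v.val < k → v ≠ 0 → D v = 0 := by
    intro k
    induction k with
    | zero => intro v hv _; omega
    | succ k ih =>
      intro v hvk hv
      rw [hrec v hv]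
      apply Finset.sum_eq_zero
      intro n hn
      simp only [Finset.mem_filter, Finset.mem_univ, true_and] at hn
      by_cases hl : v < n
      · have hvn : (v : ℕ) < (n : ℕ) := hl
        have hnN : (n : ℕ) < N + 1 := n.isLt
        rw [ih n (by omega) hn, zero_mul]
      · rw [hlam.2.1 n v hl, mul_zero]
  intro n hn
  have h0 := main (N + 1 - n.val) n (by omega) hn
  rw [hD] at h0
  beta_reduce at h0
  linarith [h0]

lemma sum_d_probOf (p : Tr N → ℝ) (F : Fin (N+1) → Fin (N+1) → ℝ)
    (E : Fin (N+1) → Fin (N+1) → Tr N → Prop) :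
    ∑ n ∈ univ.filter (· ≠ (0 : Fin (N+1))), ∑ t, F n t * probOf p (E n t)
      = ∑ T, ∑ n ∈ univ.filter (· ≠ (0 : Fin (N+1))),
          ∑ t ∈ univ.filter (fun t => E n t T), F n t * p T := by
  have h1 : ∀ n t, F n t * probOf p (E n t) = ∑ T, if E n t T then F n t * p T else 0 := by
    intro n t
    rw [probOf_eq_sum, Finset.mul_sum]
    apply Finset.sum_congr rfl
    intro T _
    rw [mul_ite, mul_zero]
  have h2 : ∀ (T : Tr N) (n : Fin (N+1)), ∑ t ∈ univ.filter (fun t => E n t T), F n t * p T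
      = ∑ t, if E n t T then F n t * p T else 0 := by
    intro T n
    exact Finset.sum_filter _ _
  calc ∑ n ∈ univ.filter (· ≠ (0:Fin (N+1))), ∑ t, F n t * probOf p (E n t)
      = ∑ n ∈ univ.filter (· ≠ (0:Fin (N+1))), ∑ t, ∑ T, if E n t T then F n t * p T else 0 :=
        Finset.sum_congr rfl (fun n _ => Finset.sum_congr rfl (fun t _ => h1 n t))
    _ = ∑ n ∈ univ.filter (· ≠ (0:Fin (N+1))), ∑ T, ∑ t, (if E n t T then F n t * p T else 0) :=
        Finset.sum_congr rfl (fun n _ => Finset.sum_comm)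
    _ = ∑ T, ∑ n ∈ univ.filter (· ≠ (0:Fin (N+1))), ∑ t, (if E n t T then F n t * p T else 0) :=
        Finset.sum_comm
    _ = _ := Finset.sum_congr rfl (fun T _ => Finset.sum_congr rfl (fun n _ => (h2 T n).symm))

lemma sum_ite_eq_filter (U : Fin (N+1) → Prop) (g : Fin (N+1) → ℝ) :
    ∑ n, (if U n then g n else 0) = ∑ n ∈ univ.filter U, g n :=
  (Finset.sum_filter U g).symm

lemma filter_eq_and (P : Fin (N+1) → Prop) (C : Prop) (b : Fin (N+1))
    (f : Fin (N+1) → ℝ) (hP : ∀ t, P t ↔ (b = t ∧ C)) :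
    ∑ t ∈ univ.filter P, f t = if C then f b else 0 := by
  by_cases hC : C
  · rw [if_pos hC]
    have hs : univ.filter P = {b} := by
      ext t
      simp only [Finset.mem_filter, Finset.mem_univ, true_and, Finset.mem_singleton, hP t]
      constructor
      · rintro ⟨h, -⟩; exact h.symm
      · intro h; exact ⟨h.symm, hC⟩
    rw [hs, Finset.sum_singleton]
  · rw [if_neg hC, Finset.filter_false_of_mem, Finset.sum_empty]
    intro t _
    rw [hP t]
    exact fun h => hC h.2

theorem statement8 (N : ℕ) (d : Fin (N+1) → Fin (N+1) → ℝ) (hd : IsMetric d)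
    (lam : Fin (N+1) → Fin (N+1) → ℝ) (hlam : LamData N lam)
    (bstar : Fin (N+1) → (Fin (N+1) → ℝ) → ℝ)
    (hco : IsCoordF (Equiv.refl _) lam bstar)
    (x y : Fin (N+1)) (hxy : x ≠ y)
    (p : Tr N → ℝ) (hp : IsProb p) (hcomp : Compat (prodProb lam) p)
    (hind : XYIndep p x y) :
    ∑ n ∈ univ.filter (· ≠ (0 : Fin (N+1))),
        |bstar n (mol x y)| * tcNorm d 0 (normBasis lam n)
      ≤ expval p (fun T => treeDist d T x y) := by
  have hq := coeff_eq hlam hco hxy hp hcomp hind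
  have hpn := hp.1
  have step1 : ∑ n ∈ univ.filter (· ≠ (0 : Fin (N+1))),
        |bstar n (mol x y)| * tcNorm d 0 (normBasis lam n)
      ≤ ∑ n ∈ univ.filter (· ≠ (0 : Fin (N+1))), ∑ t, d n t *
          probOf p (fun T => T.1 n = t ∧
            (onHalfSeg T x (meet T x y) n ∨ onHalfSeg T y (meet T x y) n)) := by
    apply Finset.sum_le_sum
    intro n hn
    simp only [Finset.mem_filter, Finset.mem_univ, true_and] at hn
    rw [hq n hn]
    set a := probOf p (fun T => onHalfSeg T x (meet T x y) n) with ha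
    set b := probOf p (fun T => onHalfSeg T y (meet T x y) n) with hb
    calc |a - b| * tcNorm d 0 (normBasis lam n)
        ≤ |a - b| * ∑ t, lam n t * d n t :=
          mul_le_mul_of_nonneg_left (tcNorm_bound hd hlam hn) (abs_nonneg _)
      _ = ∑ t, |a - b| * (lam n t * d n t) := Finset.mul_sum _ _ _
      _ ≤ ∑ t, d n t * probOf p (fun T => T.1 n = t ∧
            (onHalfSeg T x (meet T x y) n ∨ onHalfSeg T y (meet T x y) n)) := by
          apply Finset.sum_le_sum
          intro t _
          by_cases htn : t < n
          · have hlamt : lam n t = probOf p (fun T => T.1 n = t) := by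
              rw [← hcomp n t htn, marginal hlam hn htn]
            have e1 := hind x (Or.inl rfl) n t htn
            have e2 := hind y (Or.inr rfl) n t htn
            rw [← ha] at e1
            rw [← hb] at e2
            have hx1 : probOf p (fun T => T.1 n = t ∧ onHalfSeg T x (meet T x y) n)
                ≤ probOf p (fun T => T.1 n = t ∧
                    (onHalfSeg T x (meet T x y) n ∨ onHalfSeg T y (meet T x y) n)) :=
              probOf_mono hpn (fun T h => ⟨h.1, Or.inl h.2⟩)
            have hy1 : probOf p (fun T => T.1 n = t ∧ onHalfSeg T y (meet T x y) n)
                ≤ probOf p (fun T => T.1 n = t ∧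
                    (onHalfSeg T x (meet T x y) n ∨ onHalfSeg T y (meet T x y) n)) :=
              probOf_mono hpn (fun T h => ⟨h.1, Or.inr h.2⟩)
            have hx0 : 0 ≤ probOf p (fun T => T.1 n = t ∧ onHalfSeg T x (meet T x y) n) :=
              probOf_nonneg hpn _
            have hy0 : 0 ≤ probOf p (fun T => T.1 n = t ∧ onHalfSeg T y (meet T x y) n) :=
              probOf_nonneg hpn _
            have hP0 : 0 ≤ probOf p (fun T => T.1 n = t) := probOf_nonneg hpn _
            have key : |a - b| * probOf p (fun T => T.1 n = t)
                ≤ probOf p (fun T => T.1 n = t ∧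
                    (onHalfSeg T x (meet T x y) n ∨ onHalfSeg T y (meet T x y) n)) := by
              have heq : |a - b| * probOf p (fun T => T.1 n = t)
                  = |probOf p (fun T => T.1 n = t ∧ onHalfSeg T x (meet T x y) n)
                      - probOf p (fun T => T.1 n = t ∧ onHalfSeg T y (meet T x y) n)| := by
                rw [e1, e2, ← mul_sub, abs_mul, abs_of_nonneg hP0, mul_comm]
              rw [heq, abs_sub_le_iff]
              constructor <;> linarith
            calc |a - b| * (lam n t * d n t) = d n t * (|a - b| * lam n t) := by ring
              _ = d n t * (|a - b| * probOf p (fun T => T.1 n = t)) := by rw [hlamt]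
              _ ≤ d n t * probOf p (fun T => T.1 n = t ∧
                    (onHalfSeg T x (meet T x y) n ∨ onHalfSeg T y (meet T x y) n)) :=
                  mul_le_mul_of_nonneg_left key (metric_nonneg hd n t)
          · rw [hlam.2.1 n t htn, zero_mul, mul_zero]
            exact mul_nonneg (metric_nonneg hd n t) (probOf_nonneg hpn _)
  have step2 : ∑ n ∈ univ.filter (· ≠ (0 : Fin (N+1))), ∑ t, d n t *
        probOf p (fun T => T.1 n = t ∧
          (onHalfSeg T x (meet T x y) n ∨ onHalfSeg T y (meet T x y) n))
      = expval p (fun T => treeDist d T x y) := by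
    rw [sum_d_probOf p (fun n t => d n t) (fun n t T => T.1 n = t ∧
      (onHalfSeg T x (meet T x y) n ∨ onHalfSeg T y (meet T x y) n))]
    unfold expval
    apply Finset.sum_congr rfl
    intro T _
    refine Eq.trans (Finset.sum_congr rfl (fun n _ =>
      filter_eq_and _ _ (T.1 n) (fun t => d n t * p T) (fun t => Iff.rfl))) ?_
    refine Eq.trans (Finset.sum_filter_of_ne ?_) ?_
    · intro n _ hne
      intro h0
      apply hne
      subst h0
      rw [if_neg]
      rintro (⟨h1, h2, h3⟩ | ⟨h1, h2, h3⟩) <;> exact h3 (anc_of_zero h2).symm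
    · unfold treeDist
      rw [Finset.mul_sum]
      beta_reduce
      refine Eq.trans (sum_ite_eq_filter _ _) ?_
      apply Finset.sum_congr
      · ext s
        simp only [Finset.mem_filter, Finset.mem_univ, true_and]
        unfold onHalfSeg
        tauto
      · intro n _
        exact mul_comm _ _
  exact le_trans step1 (le_of_eq step2)


end TCS
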